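/- Suppose Y is linearly ordered with greatest element max Y. Let F ⊆ Y^X be a nonempty class that is closed under permutation (c.u.p.) and such that every f ∈ F takes the value max Y at exactly m points, where 1 ≤ m ≤ n. Then for every optimiser a, the expected optimisation time under the uniform distribution on F equals (n+1)/(m+1): Σ_{f ∈ F} (1/|F|) · M_ptm(T^y(a,f)) = (n+1)/(m+1). -/

import Mathlib

namespace NFL

/-- A (deterministic) optimiser on search space `Fin n` and range `Y`:
it assigns to every trace (list of pairs with pairwise distinct first
components) of length `< n` a next, unvisited search point. -/
structure Optimiser (n : ℕ) (Y : Type*) where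
  next : List (Fin n × Y) → Fin n
  valid : ∀ T : List (Fin n × Y), T.length < n → (T.map Prod.fst).Nodup →
    next T ∉ T.map Prod.fst

variable {n : ℕ} {Y : Type*}

/-- The trace generated after `k` steps by running optimiser `a`
on target function `f`, starting from the empty trace. -/
def runFrom (a : Optimiser n Y) (f : Fin n → Y) : ℕ → List (Fin n × Y)
  | 0 => []
  | k + 1 =>
      runFrom a f k ++ [(a.next (runFrom a f k), f (a.next (runFrom a f k)))]

/-- The result vector `T^y(a,f)`: its `i`-th entry (0-indexed) is the value
observed at step `i+1`, i.e. `f` applied to the point probed after `i` steps. -/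
def resVec (a : Optimiser n Y) (f : Fin n → Y) (i : Fin n) : Y :=
  f (a.next (runFrom a f (i : ℕ)))

/-- A problem distribution: a probability distribution on `Y^X`. -/
def IsProbDist [Fintype Y] (P : (Fin n → Y) → ℝ) : Prop :=
  (∀ f, 0 ≤ P f) ∧ ∑ f, P f = 1

/-- `P_a(R)`: the probability that optimiser `a` produces result vector `R`. -/
def resProb [Fintype Y] [DecidableEq Y] (P : (Fin n → Y) → ℝ)
    (a : Optimiser n Y) (R : Fin n → Y) : ℝ :=
  ∑ f ∈ Finset.univ.filter (fun f => resVec a f = R), P f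

/-- Expected performance `M^P(a)` of optimiser `a` under distribution `P`
and performance measure `M`. -/
def perf [Fintype Y] (P : (Fin n → Y) → ℝ) (M : (Fin n → Y) → ℝ)
    (a : Optimiser n Y) : ℝ :=
  ∑ f, P f * M (resVec a f)

/-- NFL holds for `P`: all optimisers have the same expected performance
under every (nonnegative) performance measure. -/
def NFLholds [Fintype Y] (P : (Fin n → Y) → ℝ) : Prop :=
  ∀ M : (Fin n → Y) → ℝ, (∀ R, 0 ≤ M R) →
    ∀ a b : Optimiser n Y, perf P M a = perf P M b

/-- The histogram of `f`: `h_f(y) = |f⁻¹(y)|`. -/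
def histogram [DecidableEq Y] (f : Fin n → Y) (y : Y) : ℕ :=
  (Finset.univ.filter fun x => f x = y).card

/-- `P` is block uniform: functions with equal histograms get equal probability. -/
def BlockUniform [DecidableEq Y] (P : (Fin n → Y) → ℝ) : Prop :=
  ∀ f g : Fin n → Y, histogram f = histogram g → P f = P g

/-- `F` is closed under permutation: `f ∈ F` implies `σf ∈ F`,
where `(σf)(x) = f(σ⁻¹(x))`. -/
def Cup [Fintype Y] [DecidableEq Y] (F : Finset (Fin n → Y)) : Prop :=
  ∀ f ∈ F, ∀ σ : Equiv.Perm (Fin n), (f ∘ σ.symm) ∈ F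

/-- The uniform distribution on a class `F`. -/
noncomputable def uniformOn [Fintype Y] [DecidableEq Y] (F : Finset (Fin n → Y))
    (f : Fin n → Y) : ℝ :=
  if f ∈ F then 1 / F.card else 0

/-- An optimiser is non-adaptive if it probes the points of `X` in a fixed
order, regardless of the observed values. -/
def NonAdaptive (a : Optimiser n Y) : Prop :=
  ∃ ord : Fin n → Fin n,
    ∀ (f : Fin n → Y) (i : Fin n), a.next (runFrom a f (i : ℕ)) = ord i

/-- Optimisation time `M_ptm(R)`: the least index `i` (counting from 1) with
`R[i] = yMax`, with the convention `M_ptm(R) = n` if no such index exists. -/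
def mptm [DecidableEq Y] (yMax : Y) (R : Fin n → Y) : ℕ :=
  if h : ∃ i, R i = yMax then
    ((Finset.univ.filter fun i => R i = yMax).min'
      ⟨h.choose, Finset.mem_filter.mpr ⟨Finset.mem_univ _, h.choose_spec⟩⟩).val + 1
  else n


section Aux

open Finset

lemma runFrom_length (a : Optimiser n Y) (f : Fin n → Y) (k : ℕ) :
    (runFrom a f k).length = k := by
  induction k with
  | zero => rfl
  | succ k ih => simp [runFrom, ih]

lemma runFrom_map_fst (a : Optimiser n Y) (f : Fin n → Y) (k : ℕ) :
    (runFrom a f k).map Prod.fst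
      = (List.range k).map (fun j => a.next (runFrom a f j)) := by
  induction k with
  | zero => rfl
  | succ k ih => simp [runFrom, List.range_succ, ih]

lemma runFrom_nodup (a : Optimiser n Y) (f : Fin n → Y) (k : ℕ) (hk : k ≤ n) :
    ((runFrom a f k).map Prod.fst).Nodup := by
  induction k with
  | zero => simp [runFrom]
  | succ k ih =>
    have ihh := ih (Nat.le_of_succ_le hk)
    have hlen : (runFrom a f k).length < n := by rw [runFrom_length]; omega
    have hnot := a.valid _ hlen ihh
    simp [runFrom, List.nodup_append, ihh, hnot]
    intro b y hb heq
    subst heq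
    exact hnot (List.mem_map.mpr ⟨(_, y), hb, rfl⟩)

lemma probe_mem (a : Optimiser n Y) (f : Fin n → Y) {i j : ℕ} (hij : i < j) :
    a.next (runFrom a f i) ∈ (runFrom a f j).map Prod.fst := by
  rw [runFrom_map_fst]
  exact List.mem_map_of_mem (List.mem_range.mpr hij)

lemma probe_injective (a : Optimiser n Y) (f : Fin n → Y) :
    Function.Injective (fun i : Fin n => a.next (runFrom a f (i : ℕ))) := by
  have key : ∀ i j : Fin n, (i : ℕ) < j →
      a.next (runFrom a f (i:ℕ)) ≠ a.next (runFrom a f (j:ℕ)) := by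
    intro i j h heq
    have hmem := probe_mem a f h
    have hlen : (runFrom a f (j:ℕ)).length < n := by rw [runFrom_length]; exact j.isLt
    have hval := a.valid _ hlen (runFrom_nodup a f _ (le_of_lt j.isLt))
    exact hval (heq ▸ hmem)
  intro i j hij
  rcases lt_trichotomy (i:ℕ) (j:ℕ) with h|h|h
  · exact absurd hij (key i j h)
  · exact Fin.ext h
  · exact absurd hij.symm (key j i h)

/-- The probing order of `a` on `f`, as an equivalence. -/
noncomputable def probeEquiv (a : Optimiser n Y) (f : Fin n → Y) : Fin n ≃ Fin n :=
  Equiv.ofBijective _ ((Finite.injective_iff_bijective).mp (probe_injective a f))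

lemma runFrom_congr (a : Optimiser n Y) {f g : Fin n → Y}
    (h : resVec a f = resVec a g) : ∀ k, k ≤ n → runFrom a f k = runFrom a g k := by
  intro k
  induction k with
  | zero => intro _; rfl
  | succ k ih =>
    intro hk
    have ht := ih (Nat.le_of_succ_le hk)
    have hfg : f (a.next (runFrom a g k)) = g (a.next (runFrom a g k)) := by
      have h1 : resVec a f ⟨k, hk⟩ = resVec a g ⟨k, hk⟩ := by rw [h]
      simpa [resVec, ht] using h1
    simp [runFrom, ht, hfg]

lemma resVec_injective (a : Optimiser n Y) : Function.Injective (resVec a) := by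
  intro f g h
  have ht := runFrom_congr a h
  funext x
  obtain ⟨i, rfl⟩ := (probeEquiv a f).surjective x
  have hp : a.next (runFrom a f (i:ℕ)) = a.next (runFrom a g (i:ℕ)) := by
    rw [ht _ (le_of_lt i.isLt)]
  have h1 : resVec a f i = resVec a g i := by rw [h]
  simp only [resVec] at h1
  rw [← hp] at h1
  simpa [probeEquiv] using h1

lemma resVec_mem [Fintype Y] [DecidableEq Y] {F : Finset (Fin n → Y)} (hcup : Cup F)
    (a : Optimiser n Y) {f : Fin n → Y} (hf : f ∈ F) : resVec a f ∈ F := by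
  have h := hcup f hf (probeEquiv a f).symm
  have he : f ∘ ((probeEquiv a f).symm).symm = resVec a f := by
    funext i
    simp [probeEquiv, resVec]
  rwa [he] at h

lemma sum_resVec [Fintype Y] [DecidableEq Y] {F : Finset (Fin n → Y)} (hcup : Cup F)
    (a : Optimiser n Y) (M : (Fin n → Y) → ℝ) :
    ∑ f ∈ F, M (resVec a f) = ∑ f ∈ F, M f := by
  refine Finset.sum_bij (fun f _ => resVec a f) (fun f hf => resVec_mem hcup a hf)
    (fun f₁ _ f₂ _ h => resVec_injective a h) ?_ (fun _ _ => rfl)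
  intro b hb
  obtain ⟨g, hg, hbg⟩ := Finset.surj_on_of_inj_on_of_card_le
    (fun f (_ : f ∈ F) => resVec a f) (fun f hf => resVec_mem hcup a hf)
    (fun f₁ f₂ _ _ h => resVec_injective a h) le_rfl b hb
  exact ⟨g, hg, hbg.symm⟩

lemma exists_perm_finset {A B : Finset (Fin n)} (h : A.card = B.card) :
    ∃ σ : Equiv.Perm (Fin n), ∀ x, σ x ∈ B ↔ x ∈ A := by
  have e1 : {x // x ∈ A} ≃ {x // x ∈ B} := Fintype.equivOfCardEq (by simpa using h)
  have e2 : {x // ¬ x ∈ A} ≃ {x // ¬ x ∈ B} := Fintype.equivOfCardEq (by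
    rw [Fintype.card_subtype_compl, Fintype.card_subtype_compl]
    simp [h])
  refine ⟨((Equiv.sumCompl (· ∈ A)).symm.trans (e1.sumCongr e2)).trans
    (Equiv.sumCompl (· ∈ B)), fun x => ?_⟩
  by_cases hx : x ∈ A
  · simp [Equiv.sumCompl_symm_apply_of_pos hx, hx, (e1 ⟨x, hx⟩).2]
  · simp [Equiv.sumCompl_symm_apply_of_neg hx, hx, (e2 ⟨x, hx⟩).2]

lemma fiber_card_eq [Fintype Y] [DecidableEq Y] {F : Finset (Fin n → Y)} (hcup : Cup F)
    (yMax : Y) {A B : Finset (Fin n)} (h : A.card = B.card) :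
    (F.filter fun f => (Finset.univ.filter fun x => f x = yMax) = A).card
      = (F.filter fun f => (Finset.univ.filter fun x => f x = yMax) = B).card := by
  obtain ⟨σ, hσ⟩ := exists_perm_finset h.symm
  refine Finset.card_bij' (fun f _ => f ∘ σ) (fun g _ => g ∘ σ.symm) ?_ ?_ ?_ ?_
  · intro f hf
    simp only [Finset.mem_filter] at hf ⊢
    obtain ⟨hfF, hfA⟩ := hf
    have hA : ∀ x, f x = yMax ↔ x ∈ A := by
      intro x
      rw [← hfA]; simp
    constructor
    · have := hcup f hfF σ.symm
      simpa using this
    · ext x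
      simp only [Finset.mem_filter, Finset.mem_univ, true_and, Function.comp_apply]
      rw [hA, hσ]
  · intro g hg
    simp only [Finset.mem_filter] at hg ⊢
    obtain ⟨hgF, hgB⟩ := hg
    have hB : ∀ x, g x = yMax ↔ x ∈ B := by
      intro x
      rw [← hgB]; simp
    constructor
    · exact hcup g hgF σ
    · ext x
      simp only [Finset.mem_filter, Finset.mem_univ, true_and, Function.comp_apply]
      rw [hB, ← hσ (σ.symm x), Equiv.apply_symm_apply]
  · intro f _; funext x; simp
  · intro g _; funext x; simp

lemma card_filter_subsetS [Fintype Y] [DecidableEq Y] {F : Finset (Fin n → Y)} (hcup : Cup F)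
    (yMax : Y) {m : ℕ}
    (hmax : ∀ f ∈ F, (Finset.univ.filter fun x => f x = yMax).card = m)
    {A₀ : Finset (Fin n)} (hA₀ : A₀.card = m) (S : Finset (Fin n)) :
    (F.filter fun f => (Finset.univ.filter fun x => f x = yMax) ⊆ S).card
      = (S.card.choose m) *
        (F.filter fun f => (Finset.univ.filter fun x => f x = yMax) = A₀).card := by
  rw [Finset.card_eq_sum_card_fiberwise
    (f := fun f => Finset.univ.filter fun x => f x = yMax) (t := S.powersetCard m)
    (by
      intro f hf
      simp only [Finset.mem_coe, Finset.mem_filter] at hf ⊢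
      rw [Finset.mem_powersetCard]
      exact ⟨hf.2, hmax f hf.1⟩)]
  rw [Finset.sum_congr rfl (fun A hA => ?_)]
  · rw [Finset.sum_const, Finset.card_powersetCard, smul_eq_mul]
  · rw [Finset.mem_powersetCard] at hA
    have heq : (F.filter fun f => (Finset.univ.filter fun x => f x = yMax) ⊆ S).filter
        (fun f => (Finset.univ.filter fun x => f x = yMax) = A)
        = F.filter fun f => (Finset.univ.filter fun x => f x = yMax) = A := by
      rw [Finset.filter_filter]
      apply Finset.filter_congr
      intro f _
      constructor
      · exact fun h => h.2
      · intro h; exact ⟨h ▸ hA.1, h⟩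
    rw [heq]
    exact fiber_card_eq hcup yMax (by rw [hA.2, hA₀])

lemma min_filter_eq [DecidableEq Y] (yMax : Y) (R : Fin n → Y)
    (hne : (Finset.univ.filter fun i => R i = yMax).Nonempty) :
    (((Finset.univ.filter fun i => R i = yMax).min' hne : Fin n) : ℕ)
      = ((Finset.range n).filter fun t =>
          (Finset.univ.filter fun i => R i = yMax)
            ⊆ (Finset.univ.filter fun i : Fin n => t < (i:ℕ))).card := by
  set A := Finset.univ.filter fun i => R i = yMax with hAdef
  have hfe : ((Finset.range n).filter fun t =>
        A ⊆ (Finset.univ.filter fun i : Fin n => t < (i:ℕ)))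
      = Finset.range ((A.min' hne : Fin n) : ℕ) := by
    ext t
    simp only [Finset.mem_filter, Finset.mem_range, Finset.subset_iff, Finset.mem_univ,
      true_and]
    constructor
    · rintro ⟨htn, hsub⟩
      have := hsub (Finset.min'_mem A hne)
      simpa using this
    · intro ht
      have h1 : ((A.min' hne : Fin n) : ℕ) < n := (A.min' hne).isLt
      refine ⟨by omega, ?_⟩
      intro i hi
      have h2 : A.min' hne ≤ i := Finset.min'_le A i hi
      have h3 : ((A.min' hne : Fin n) : ℕ) ≤ (i : ℕ) := h2
      omega
  rw [hfe, Finset.card_range]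

lemma mptm_eq [DecidableEq Y] (yMax : Y) (R : Fin n → Y)
    (h : ∃ i, R i = yMax) (hne : (Finset.univ.filter fun i => R i = yMax).Nonempty) :
    mptm yMax R = (((Finset.univ.filter fun i => R i = yMax).min' hne : Fin n) : ℕ) + 1 := by
  rw [mptm, dif_pos h]

lemma card_gt_fin (t : ℕ) :
    (Finset.univ.filter fun i : Fin n => t < (i:ℕ)).card = n - (t+1) := by
  rw [← Nat.card_Ico (t+1) n]
  refine Finset.card_bij (fun i _ => (i : ℕ)) ?_ ?_ ?_
  · intro i hi
    simp only [Finset.mem_filter, Finset.mem_univ, true_and] at hi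
    simp only [Finset.mem_Ico]
    exact ⟨hi, i.isLt⟩
  · intro i _ j _ hij; exact Fin.ext hij
  · intro v hv
    simp only [Finset.mem_Ico] at hv
    exact ⟨⟨v, hv.2⟩, by simp; omega, rfl⟩

lemma sum_choose_aux {m : ℕ} (hn : 1 ≤ n) :
    ∑ t ∈ Finset.range n, Nat.choose t m = Nat.choose n (m+1) := by
  have h1 : ∑ t ∈ Finset.Icc m (n-1), Nat.choose t m = Nat.choose n (m+1) := by
    rw [Nat.sum_Icc_choose]
    congr 1
    omega
  rw [← h1]
  refine (Finset.sum_subset ?_ ?_).symm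
  · intro t ht
    simp only [Finset.mem_Icc] at ht
    simp only [Finset.mem_range]
    omega
  · intro t ht hnt
    simp only [Finset.mem_range] at ht
    simp only [Finset.mem_Icc] at hnt
    exact Nat.choose_eq_zero_of_lt (by omega)

end Aux

theorem cup_expected_optimisation_time {n : ℕ} {Y : Type*}
    [Fintype Y] [LinearOrder Y]
    (hn : 1 ≤ n) (hY : 2 ≤ Fintype.card Y)
    (yMax : Y) (hyMax : ∀ y : Y, y ≤ yMax)
    (F : Finset (Fin n → Y)) (hF : F.Nonempty) (hcup : Cup F)
    (m : ℕ) (hm1 : 1 ≤ m) (hmn : m ≤ n)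
    (hmax : ∀ f ∈ F, (Finset.univ.filter fun x => f x = yMax).card = m)
    (a : Optimiser n Y) :
    ∑ f ∈ F, (1 / (F.card : ℝ)) * (mptm yMax (resVec a f) : ℝ)
      = ((n : ℝ) + 1) / ((m : ℝ) + 1) := by
  classical
  obtain ⟨A₀, -, hA₀⟩ := Finset.exists_subset_card_eq (s := (Finset.univ : Finset (Fin n))) (n := m)
    (by simpa using hmn)
  obtain ⟨c, hc⟩ : ∃ k, (F.filter fun f =>
      (Finset.univ.filter fun x => f x = yMax) = A₀).card = k := ⟨_, rfl⟩
  have hFc : F.card = Nat.choose n m * c := by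
    have h1 := card_filter_subsetS hcup yMax hmax hA₀ Finset.univ
    rw [Finset.filter_true_of_mem (fun f _ => Finset.subset_univ _), hc] at h1
    rwa [Finset.card_univ, Fintype.card_fin] at h1
  have hstep : ∀ f ∈ F, mptm yMax f
      = ((Finset.range n).filter fun t => (Finset.univ.filter fun i => f i = yMax)
          ⊆ (Finset.univ.filter fun i : Fin n => t < (i:ℕ))).card + 1 := by
    intro f hf
    have hcard := hmax f hf
    have hpos : 0 < (Finset.univ.filter fun i => f i = yMax).card := by
      rw [hcard]; exact hm1
    have hne : (Finset.univ.filter fun i => f i = yMax).Nonempty :=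
      Finset.card_pos.mp hpos
    have hex : ∃ i, f i = yMax := by
      obtain ⟨i, hi⟩ := hne
      exact ⟨i, (Finset.mem_filter.mp hi).2⟩
    rw [mptm_eq yMax f hex hne, min_filter_eq yMax f hne]
  have hSnat : ∑ f ∈ F, mptm yMax f = Nat.choose (n+1) (m+1) * c := by
    rw [Finset.sum_congr rfl hstep, Finset.sum_add_distrib, Finset.sum_const,
      smul_eq_mul, mul_one]
    have hswap : (∑ f ∈ F, ((Finset.range n).filter fun t =>
          (Finset.univ.filter fun i => f i = yMax)
            ⊆ (Finset.univ.filter fun i : Fin n => t < (i:ℕ))).card)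
        = ∑ t ∈ Finset.range n, (F.filter fun f =>
            (Finset.univ.filter fun i => f i = yMax)
              ⊆ (Finset.univ.filter fun i : Fin n => t < (i:ℕ))).card := by
      simp only [Finset.card_filter]
      exact Finset.sum_comm
    rw [hswap]
    have hper : ∀ t ∈ Finset.range n, (F.filter fun f =>
        (Finset.univ.filter fun i => f i = yMax)
          ⊆ (Finset.univ.filter fun i : Fin n => t < (i:ℕ))).card
        = Nat.choose (n-1-t) m * c := by
      intro t _
      have h1 := card_filter_subsetS hcup yMax hmax hA₀
        (Finset.univ.filter fun i : Fin n => t < (i:ℕ))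
      rw [card_gt_fin, hc] at h1
      have he : n - (t+1) = n - 1 - t := by rw [Nat.sub_sub, Nat.add_comm]
      rw [he] at h1
      exact h1
    rw [Finset.sum_congr rfl hper, ← Finset.sum_mul]
    rw [Finset.sum_range_reflect (fun t => Nat.choose t m) n]
    rw [sum_choose_aux hn, hFc]
    rw [Nat.choose_succ_succ]
    ring
  have hSnatsum := sum_resVec hcup a (fun R => ((mptm yMax R : ℕ) : ℝ))
  rw [← Finset.mul_sum, hSnatsum]
  have hcast : (∑ f ∈ F, ((mptm yMax f : ℕ) : ℝ)) = ((∑ f ∈ F, mptm yMax f : ℕ) : ℝ) := by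
    push_cast
    rfl
  rw [hcast, hSnat]
  have hFpos : 0 < F.card := Finset.card_pos.mpr hF
  have h2 : (n+1) * n.choose m = (n+1).choose (m+1) * (m+1) := Nat.add_one_mul_choose_eq n m
  have key : (m+1) * (Nat.choose (n+1) (m+1) * c) = (n+1) * F.card := by
    rw [hFc]
    calc (m+1) * ((n+1).choose (m+1) * c) = ((n+1).choose (m+1) * (m+1)) * c := by ring
    _ = ((n+1) * n.choose m) * c := by rw [h2]
    _ = (n+1) * (n.choose m * c) := by ring
  have keyR : ((m:ℝ)+1) * ((Nat.choose (n+1) (m+1) * c : ℕ) : ℝ)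
      = ((n:ℝ)+1) * (F.card : ℝ) := by exact_mod_cast key
  have hFne : (F.card : ℝ) ≠ 0 := by
    have : (0:ℝ) < F.card := by exact_mod_cast hFpos
    linarith
  have hmne : ((m:ℝ)+1) ≠ 0 := by positivity
  push_cast at keyR ⊢
  field_simp
  linear_combination keyR

end NFL
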